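/- For every real z with 0 < z < 1, one has ∫_0^1 (2·log(t) + 3)·(t−1)/(z·t−1) dt = (1/z²)·( z + 3(1−z)·log(1−z) + 2(1−z)·Li_2(z) ). -/

import Mathlib

/-- The polylogarithm `Li_s(z) = Σ_{k ≥ 1} z^k / k^s`. -/
noncomputable def Li (s : ℕ) (z : ℝ) : ℝ := ∑' k : ℕ, z ^ (k + 1) / ((k : ℝ) + 1) ^ s

open Real MeasureTheory Set intervalIntegral

private lemma contF (k : ℕ) : Continuous (fun t : ℝ => t ^ (k+1) * Real.log t) := by
  have : (fun t : ℝ => t ^ (k+1) * Real.log t) = fun t => t ^ k * (t * Real.log t) := by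
    funext t; rw [pow_succ]; ring
  rw [this]
  exact (continuous_pow k).mul Real.continuous_mul_log

private lemma contG (k : ℕ) : Continuous (fun t : ℝ =>
    t ^ (k+1) * Real.log t / ((k:ℝ)+1) - t ^ (k+1) / ((k:ℝ)+1)^2) :=
  ((contF k).div_const _).sub ((continuous_pow (k+1)).div_const _)

private lemma derivF (k : ℕ) {x : ℝ} (hx : 0 < x) :
    HasDerivAt (fun t : ℝ => t ^ (k+1) * Real.log t / ((k:ℝ)+1) - t ^ (k+1) / ((k:ℝ)+1)^2)
      (x ^ k * Real.log x) x := by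
  have hk : ((k:ℝ)+1) ≠ 0 := by positivity
  have h1 : HasDerivAt (fun t : ℝ => t ^ (k+1) * Real.log t)
      ((((k:ℝ)+1) * x ^ k) * Real.log x + x ^ k) x := by
    have := (hasDerivAt_pow (k+1) x).mul (Real.hasDerivAt_log hx.ne')
    refine this.congr_deriv ?_
    push_cast
    field_simp
    ring
  have h2 : HasDerivAt (fun t : ℝ => t ^ (k+1)) (((k:ℝ)+1) * x ^ k) x := by
    have := hasDerivAt_pow (k+1) x
    refine this.congr_deriv ?_; push_cast; simp
  have h := (h1.div_const (((k:ℝ)+1))).sub (h2.div_const (((k:ℝ)+1)^2))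
  refine h.congr_deriv ?_
  field_simp
  ring

private lemma intable (k : ℕ) :
    IntervalIntegrable (fun t : ℝ => t ^ k * Real.log t) volume 0 1 := by
  have h := intervalIntegrable_deriv_of_nonneg (a := (0:ℝ)) (b := 1)
      (g := fun t : ℝ =>
        -(t ^ (k+1) * Real.log t / ((k:ℝ)+1) - t ^ (k+1) / ((k:ℝ)+1)^2))
      (g' := fun t : ℝ => -(t ^ k * Real.log t))
      (contG k).neg.continuousOn
      (fun x hx => ((derivF k (by
        simp only [min_eq_left, max_eq_right, zero_le_one, mem_Ioo] at hx
        exact hx.1)).neg))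
      (fun x hx => by
        simp only [min_eq_left, max_eq_right, zero_le_one, mem_Ioo] at hx
        have h1 : Real.log x ≤ 0 := Real.log_nonpos (le_of_lt hx.1) hx.2.le
        have h2 : (0:ℝ) ≤ x ^ k := pow_nonneg hx.1.le k
        simp only [neg_nonneg]
        nlinarith)
  have h2 := h.neg
  have : (-fun t : ℝ => -(t ^ k * Real.log t)) = fun t : ℝ => t ^ k * Real.log t := by
    funext t; simp
  rwa [this] at h2

private lemma intlog_pow (k : ℕ) :
    ∫ t in (0:ℝ)..1, t ^ k * Real.log t = -(1/((k:ℝ)+1)^2) := by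
  have hk : ((k:ℝ)+1) ≠ 0 := by positivity
  rw [integral_eq_sub_of_hasDerivAt_of_le (by norm_num)
      (contG k).continuousOn
      (fun x hx => derivF k (mem_Ioo.mp hx).1) (intable k)]
  simp [Real.log_one]

private lemma summ {z : ℝ} (hz0 : 0 < z) (hz1 : z < 1) :
    Summable (fun k : ℕ => z ^ k * (1/((k:ℝ)+1)^2)) := by
  apply Summable.of_nonneg_of_le (fun k => by positivity) (fun k => ?_)
    (summable_geometric_of_lt_one hz0.le hz1)
  have h1 : (1:ℝ) ≤ ((k:ℝ)+1)^2 := by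
    have : (1:ℝ) ≤ (k:ℝ)+1 := by
      have := Nat.cast_nonneg (α := ℝ) k; linarith
    nlinarith
  have h2 : (1:ℝ)/((k:ℝ)+1)^2 ≤ 1 := by
    rw [div_le_one (by positivity)]; exact h1
  nlinarith [pow_nonneg hz0.le k]

private lemma Li_eq {z : ℝ} : Li 2 z = z * ∑' k : ℕ, z ^ k * (1/((k:ℝ)+1)^2) := by
  rw [Li, ← tsum_mul_left]
  congr 1; funext k
  rw [pow_succ']
  ring

private lemma intlogfrac {z : ℝ} (hz0 : 0 < z) (hz1 : z < 1) :
    ∫ t in (0:ℝ)..1, Real.log t / (1 - z*t) = -(Li 2 z)/z := by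
  have hle : (0:ℝ) ≤ 1 := by norm_num
  set F : ℕ → ℝ → ℝ := fun k t => z^k * (t^k * Real.log t) with hF
  have h_int : ∀ k : ℕ, Integrable (F k) (volume.restrict (Ioc (0:ℝ) 1)) :=
    fun k => ((intable k).const_mul (z^k)).1
  have h_val : ∀ k : ℕ, ∫ t in Ioc (0:ℝ) 1, F k t = z^k * (-(1/((k:ℝ)+1)^2)) := by
    intro k
    rw [← intervalIntegral.integral_of_le hle]
    rw [intervalIntegral.integral_const_mul, intlog_pow k]
  have h_norm : ∀ k : ℕ, ∫ t in Ioc (0:ℝ) 1, ‖F k t‖ = z^k * (1/((k:ℝ)+1)^2) := by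
    intro k
    have : ∀ t ∈ Ioc (0:ℝ) 1, ‖F k t‖ = -(F k t) := by
      intro t ht
      rw [Real.norm_eq_abs, abs_of_nonpos]
      have h1 : Real.log t ≤ 0 := Real.log_nonpos ht.1.le ht.2
      have h2 : (0:ℝ) ≤ t ^ k := pow_nonneg ht.1.le k
      have h3 : (0:ℝ) ≤ z ^ k := pow_nonneg hz0.le k
      simp only [hF]
      have h4 : t ^ k * Real.log t ≤ 0 := mul_nonpos_of_nonneg_of_nonpos h2 h1
      exact mul_nonpos_of_nonneg_of_nonpos h3 h4
    rw [setIntegral_congr_fun measurableSet_Ioc this, MeasureTheory.integral_neg, h_val]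
    ring
  have h_sum : Summable fun k : ℕ => ∫ t in Ioc (0:ℝ) 1, ‖F k t‖ := by
    simp_rw [h_norm]
    exact summ hz0 hz1
  have key := MeasureTheory.integral_tsum_of_summable_integral_norm h_int h_sum
  have hpt : ∀ t ∈ Ioc (0:ℝ) 1, (∑' k : ℕ, F k t) = Real.log t / (1 - z*t) := by
    intro t ht
    have hzt0 : 0 ≤ z * t := mul_nonneg hz0.le ht.1.le
    have hzt1 : z * t < 1 := by nlinarith [ht.2, ht.1]
    have : (fun k : ℕ => F k t) = fun k : ℕ => (z*t)^k * Real.log t := by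
      funext k; simp only [hF, mul_pow]; ring
    rw [this, tsum_mul_right, tsum_geometric_of_lt_one hzt0 hzt1]
    rw [div_eq_mul_inv, mul_comm]
  rw [intervalIntegral.integral_of_le hle,
    ← setIntegral_congr_fun measurableSet_Ioc hpt, ← key]
  simp_rw [h_val]
  have : ∀ k : ℕ, z ^ k * -(1/((k:ℝ)+1)^2) = -(z ^ k * (1/((k:ℝ)+1)^2)) := fun k => by ring
  simp_rw [this]
  rw [tsum_neg, Li_eq]
  field_simp

private lemma denom_pos {z t : ℝ} (hz0 : 0 < z) (hz1 : z < 1) (ht : t ∈ Icc (0:ℝ) 1) :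
    0 < 1 - z * t := by
  have : z * t ≤ z * 1 := mul_le_mul_of_nonneg_left ht.2 hz0.le
  nlinarith

private lemma contInv {z : ℝ} (hz0 : 0 < z) (hz1 : z < 1) :
    ContinuousOn (fun t : ℝ => (1 - z*t)⁻¹) (Icc (0:ℝ) 1) := by
  apply ContinuousOn.inv₀
  · exact (continuousOn_const.sub (continuousOn_const.mul continuousOn_id))
  · exact fun t ht => (denom_pos hz0 hz1 ht).ne'

private lemma intinv {z : ℝ} (hz0 : 0 < z) (hz1 : z < 1) :
    ∫ t in (0:ℝ)..1, (1 - z*t)⁻¹ = -Real.log (1 - z) / z := by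
  have huIcc : uIcc (0:ℝ) 1 = Icc 0 1 := uIcc_of_le (by norm_num)
  have hderiv : ∀ x ∈ uIcc (0:ℝ) 1,
      HasDerivAt (fun t : ℝ => -Real.log (1 - z*t) / z) ((1 - z*x)⁻¹) x := by
    intro x hx
    rw [huIcc] at hx
    have hpos := denom_pos hz0 hz1 hx
    have hinner : HasDerivAt (fun t : ℝ => 1 - z*t) (-z) x := by
      simpa using ((hasDerivAt_id x).const_mul z).const_sub 1
    have hlog : HasDerivAt (fun t : ℝ => Real.log (1 - z*t)) ((1 - z*x)⁻¹ * (-z)) x :=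
      HasDerivAt.comp (h₂ := Real.log) x (Real.hasDerivAt_log hpos.ne') hinner
    have := (hlog.neg).div_const z
    refine this.congr_deriv ?_
    field_simp
  have hint : IntervalIntegrable (fun t : ℝ => (1 - z*t)⁻¹) volume 0 1 := by
    apply ContinuousOn.intervalIntegrable
    rw [huIcc]; exact contInv hz0 hz1
  rw [intervalIntegral.integral_eq_sub_of_hasDerivAt hderiv hint]
  simp [Real.log_one]

/-- `∫₀¹ (2log t + 3)(t-1)/(zt-1) dt = (1/z²)(z + 3(1-z)log(1-z) + 2(1-z)Li₂(z))`
for `0 < z < 1`. -/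
theorem stmt8 (z : ℝ) (hz0 : 0 < z) (hz1 : z < 1) :
    ∫ t in (0:ℝ)..1, (2 * Real.log t + 3) * (t - 1) / (z * t - 1) =
      (1 / z ^ 2) * (z + 3 * (1 - z) * Real.log (1 - z) + 2 * (1 - z) * Li 2 z) := by
  have huIcc : uIcc (0:ℝ) 1 = Icc 0 1 := uIcc_of_le (by norm_num)
  have hlog : IntervalIntegrable Real.log volume 0 1 := by
    have := intable 0; simpa using this
  have hloge : ∫ t in (0:ℝ)..1, Real.log t = -1 := by
    have := intlog_pow 0; simpa using this
  have hcontinv : ContinuousOn (fun t : ℝ => (1 - z*t)⁻¹) (uIcc (0:ℝ) 1) := by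
    rw [huIcc]; exact contInv hz0 hz1
  have hinvI : IntervalIntegrable (fun t : ℝ => (1 - z*t)⁻¹) volume 0 1 :=
    hcontinv.intervalIntegrable
  have hmulI : IntervalIntegrable (fun t : ℝ => Real.log t * (1 - z*t)⁻¹) volume 0 1 :=
    hlog.mul_continuousOn hcontinv
  have hcongr : EqOn (fun t : ℝ => (2 * Real.log t + 3) * (t - 1) / (z * t - 1))
      (fun t : ℝ => (2/z) * Real.log t + 3/z
        - ((2*(1-z)/z) * (Real.log t * (1 - z*t)⁻¹) + (3*(1-z)/z) * (1 - z*t)⁻¹))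
      (uIcc (0:ℝ) 1) := by
    intro t ht
    rw [huIcc] at ht
    have hpos := denom_pos hz0 hz1 ht
    have h1 : z * t - 1 ≠ 0 := by intro h; nlinarith
    have h2 : (1 : ℝ) - z * t ≠ 0 := hpos.ne'
    have h3 : t * z - 1 ≠ 0 := by rw [mul_comm]; exact h1
    have h4 : 1 - t * z ≠ 0 := by rw [mul_comm]; exact h2
    field_simp
    ring
  rw [intervalIntegral.integral_congr hcongr]
  rw [intervalIntegral.integral_sub
      ((hlog.const_mul _).add intervalIntegrable_const)
      ((hmulI.const_mul _).add (hinvI.const_mul _)),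
    intervalIntegral.integral_add (hlog.const_mul _) intervalIntegrable_const,
    intervalIntegral.integral_add (hmulI.const_mul _) (hinvI.const_mul _),
    intervalIntegral.integral_const_mul, intervalIntegral.integral_const_mul,
    intervalIntegral.integral_const_mul, intervalIntegral.integral_const,
    hloge, intinv hz0 hz1]
  have hfrac : ∫ t in (0:ℝ)..1, Real.log t * (1 - z*t)⁻¹ = -(Li 2 z)/z := by
    have h := intlogfrac hz0 hz1
    simp_rw [div_eq_mul_inv] at h
    exact h
  rw [hfrac]
  have hz : z ≠ 0 := hz0.ne'
  field_simp
  ring_nf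
  field_simp
  ring
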